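/- Let (Ω, F, P) be a probability space, G ⊆ F a sub-σ-field, and X = (X_λ)_{λ∈Λ} a nonempty family of [-∞,∞]-valued random variables with P-integrable negative parts. Suppose that for each ε > 0 and M > 0, for all λ, λ' ∈ Λ there exists λ'' ∈ Λ with X_{λ''} ≥ (M ∧ X_λ) ∨ (M ∧ X_{λ'}) − ε P-a.s. Then P-a.s., E[esssup_{λ∈Λ} X_λ | G] = esssup_{λ∈Λ} E[X_λ | G]. -/

import Mathlib

open MeasureTheory Set Filter

variable {Ω : Type*}

/-- The positive part of an extended-real number, as a value in `[0,∞]`. -/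
noncomputable def epos (x : EReal) : ENNReal :=
  if x = ⊤ then ⊤ else ENNReal.ofReal x.toReal

/-- The negative part of an extended-real number, as a value in `[0,∞]`. -/
noncomputable def eneg (x : EReal) : ENNReal := epos (-x)

lemma epos_top : epos ⊤ = ⊤ := by simp [epos]

lemma epos_bot : epos ⊥ = 0 := by simp [epos]

lemma epos_coe (r : ℝ) : epos (r : EReal) = ENNReal.ofReal r := by
  simp [epos, EReal.coe_ne_top]

lemma eneg_coe (r : ℝ) : eneg (r : EReal) = ENNReal.ofReal (-r) := by
  rw [eneg, ← EReal.coe_neg, epos_coe]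

lemma eneg_top : eneg ⊤ = 0 := by simp [eneg, epos]

lemma eneg_bot : eneg ⊥ = ⊤ := by simp [eneg, epos]

lemma measurable_epos : Measurable epos := by
  unfold epos
  exact Measurable.ite (MeasurableSet.singleton ⊤) measurable_const
    (ENNReal.measurable_ofReal.comp measurable_ereal_toReal)

lemma measurable_eneg : Measurable eneg :=
  measurable_epos.comp measurable_neg

lemma epos_mono {x y : EReal} (h : x ≤ y) : epos x ≤ epos y := by
  induction y with
  | bot => rw [le_bot_iff] at h; simp [h]
  | coe b =>
    induction x with
    | bot => simp [epos_bot]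
    | coe a =>
      rw [epos_coe, epos_coe]
      exact ENNReal.ofReal_le_ofReal (EReal.coe_le_coe_iff.1 h)
    | top => simp at h
  | top => simp [epos_top]

lemma eneg_anti {x y : EReal} (h : x ≤ y) : eneg y ≤ eneg x :=
  epos_mono (EReal.neg_le_neg_iff.2 h)

lemma max_sub_max_neg (t : ℝ) : max t 0 - max (-t) 0 = t := by
  rcases le_total t 0 with h | h
  · rw [max_eq_right h, max_eq_left (neg_nonneg.2 h)]; ring
  · rw [max_eq_left h, max_eq_right (neg_nonpos.2 h)]; ring

lemma ofReal_eq_ofReal_max (t : ℝ) : ENNReal.ofReal t = ENNReal.ofReal (max t 0) := by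
  rcases le_total t 0 with h | h
  · rw [max_eq_right h, ENNReal.ofReal_of_nonpos h, ENNReal.ofReal_zero]
  · rw [max_eq_left h]

lemma epos_nonpos {x : EReal} (h : x ≤ 0) : epos x = 0 := by
  have := epos_mono h
  rw [show ((0:EReal)) = ((0:ℝ):EReal) by norm_cast, epos_coe, ENNReal.ofReal_zero] at this
  exact le_antisymm this zero_le

lemma eneg_nonneg {x : EReal} (h : 0 ≤ x) : eneg x = 0 :=
  epos_nonpos (by rw [show (0:EReal) = -0 by simp, EReal.neg_le_neg_iff]; exact h)

lemma eneg_min_coe {M : ℝ} (hM : 0 ≤ M) (x : EReal) : eneg (min (M : EReal) x) = eneg x := by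
  rcases le_total x (M : EReal) with h | h
  · rw [min_eq_right h]
  · rw [min_eq_left h]
    rw [eneg_nonneg (le_trans (by exact_mod_cast hM) h),
      eneg_nonneg (by exact_mod_cast hM)]

/-- Key pointwise inequality. -/
lemma key_pt {x y : EReal} {c : ℝ} (h : x ≤ y + (c : EReal)) :
    epos x + eneg y + ENNReal.ofReal (-c) ≤ epos y + eneg x + ENNReal.ofReal c := by
  induction x with
  | bot => simp [eneg_bot]
  | coe a =>
    induction y with
    | bot => simp at h
    | coe b =>
      rw [show ((b:EReal) + (c:EReal)) = ((b + c : ℝ) : EReal) by norm_cast] at h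
      rw [EReal.coe_le_coe_iff] at h
      rw [epos_coe, epos_coe, eneg_coe, eneg_coe,
        ofReal_eq_ofReal_max a, ofReal_eq_ofReal_max (-b), ofReal_eq_ofReal_max (-c),
        ofReal_eq_ofReal_max b, ofReal_eq_ofReal_max (-a), ofReal_eq_ofReal_max c,
        ← ENNReal.ofReal_add (le_max_right _ _) (le_max_right _ _),
        ← ENNReal.ofReal_add (by positivity) (le_max_right _ _),
        ← ENNReal.ofReal_add (le_max_right _ _) (le_max_right _ _),
        ← ENNReal.ofReal_add (by positivity) (le_max_right _ _)]
      apply ENNReal.ofReal_le_ofReal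
      have ia := max_sub_max_neg a
      have ib := max_sub_max_neg b
      have ic := max_sub_max_neg c
      linarith
    | top => simp [epos_top]
  | top =>
    induction y with
    | bot => rw [EReal.bot_add] at h; simp at h
    | coe b =>
      exfalso
      rw [show ((b:EReal) + (c:EReal)) = ((b + c : ℝ) : EReal) by norm_cast] at h
      exact (EReal.coe_lt_top (b+c)).not_ge h
    | top => simp [epos_top]

lemma epos_iSup {g : ℕ → EReal} (hmono : Monotone g) :
    epos (⨆ n, g n) = ⨆ n, epos (g n) := by
  apply le_antisymm
  · by_cases htop : (⨆ n, g n) = ⊤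
    · have : ⨆ n, epos (g n) = ⊤ := by
        apply ENNReal.eq_top_of_forall_nnreal_le
        intro r
        have hrs : ((r : ℝ) : EReal) < ⨆ n, g n := htop ▸ EReal.coe_lt_top _
        rw [lt_iSup_iff] at hrs
        obtain ⟨n, hn⟩ := hrs
        calc (r : ENNReal) = ENNReal.ofReal (r : ℝ) := ENNReal.ofReal_coe_nnreal.symm
        _ = epos ((r : ℝ) : EReal) := (epos_coe _).symm
        _ ≤ epos (g n) := epos_mono hn.le
        _ ≤ ⨆ n, epos (g n) := le_iSup (fun n => epos (g n)) n
      rw [this]; exact le_top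
    · by_cases hbot : (⨆ n, g n) = ⊥
      · rw [hbot, epos_bot]; exact zero_le
      · obtain ⟨t, ht⟩ : ∃ t : ℝ, (⨆ n, g n) = (t : EReal) :=
          ⟨(⨆ n, g n).toReal, (EReal.coe_toReal htop hbot).symm⟩
        rw [ht, epos_coe]
        apply ENNReal.le_of_forall_pos_le_add
        intro ε hε _
        have hlt : ((t - ε : ℝ) : EReal) < ⨆ n, g n := by
          rw [ht]; exact_mod_cast sub_lt_self t (by exact_mod_cast hε)
        rw [lt_iSup_iff] at hlt
        obtain ⟨n, hn⟩ := hlt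
        calc ENNReal.ofReal t = ENNReal.ofReal ((t - ε) + ε) := by ring_nf
        _ ≤ ENNReal.ofReal (t - ε) + ENNReal.ofReal ε := ENNReal.ofReal_add_le
        _ = epos ((t - ε : ℝ) : EReal) + (ε : ENNReal) := by
            rw [epos_coe, ENNReal.ofReal_coe_nnreal]
        _ ≤ epos (g n) + ε := by gcongr; exact epos_mono hn.le
        _ ≤ (⨆ n, epos (g n)) + ε := by gcongr; exact le_iSup (fun n => epos (g n)) n
  · exact iSup_le fun n => epos_mono (le_iSup _ n)

lemma eneg_iSup {g : ℕ → EReal} (hmono : Monotone g) :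
    eneg (⨆ n, g n) = ⨅ n, eneg (g n) := by
  apply le_antisymm
  · exact le_iInf fun n => eneg_anti (le_iSup _ n)
  · by_cases hbot : (⨆ n, g n) = ⊥
    · have hgb : ∀ n, g n = ⊥ := by
        intro n
        have := le_iSup g n
        rw [hbot, le_bot_iff] at this
        exact this
      rw [hbot]
      simp [hgb, eneg_bot]
    · by_cases htop : (⨆ n, g n) = ⊤
      · have hpos : (0 : EReal) < ⨆ n, g n := htop ▸ (by norm_num)
        rw [lt_iSup_iff] at hpos
        obtain ⟨n, hn⟩ := hpos
        calc ⨅ n, eneg (g n) ≤ eneg (g n) := iInf_le _ n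
        _ = 0 := eneg_nonneg hn.le
        _ ≤ eneg (⨆ n, g n) := zero_le
      · obtain ⟨t, ht⟩ : ∃ t : ℝ, (⨆ n, g n) = (t : EReal) :=
          ⟨(⨆ n, g n).toReal, (EReal.coe_toReal htop hbot).symm⟩
        rw [ht, eneg_coe]
        apply ENNReal.le_of_forall_pos_le_add
        intro ε hε _
        have hlt : ((t - ε : ℝ) : EReal) < ⨆ n, g n := by
          rw [ht]; exact_mod_cast sub_lt_self t (by exact_mod_cast hε)
        rw [lt_iSup_iff] at hlt
        obtain ⟨n, hn⟩ := hlt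
        calc ⨅ n, eneg (g n) ≤ eneg (g n) := iInf_le _ n
        _ ≤ eneg ((t - ε : ℝ) : EReal) := eneg_anti hn.le
        _ = ENNReal.ofReal (-(t - ε)) := eneg_coe _
        _ = ENNReal.ofReal ((-t) + ε) := by ring_nf
        _ ≤ ENNReal.ofReal (-t) + ENNReal.ofReal ε := ENNReal.ofReal_add_le
        _ = ENNReal.ofReal (-t) + (ε : ENNReal) := by rw [ENNReal.ofReal_coe_nnreal]

lemma iSup_coe_nat_top : (⨆ n : ℕ, (((n : ℝ) + 1 : ℝ) : EReal)) = ⊤ := by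
  rw [iSup_eq_top]
  intro b hb
  induction b with
  | bot => exact ⟨0, by exact_mod_cast EReal.bot_lt_coe ((0:ℕ) + 1 : ℝ)⟩
  | coe r =>
    obtain ⟨n, hn⟩ := exists_nat_gt r
    exact ⟨n, by exact_mod_cast lt_trans hn (by norm_num)⟩
  | top => exact absurd hb (lt_irrefl _)

/-- `Y` is a version of the conditional expectation `E[X | G]` under `P`, for an
extended-real-valued `X` (with one of its parts integrable): `Y` is `G`-measurable and for
every `B ∈ G` the (possibly infinite) integrals of `X` and `Y` over `B` agree, expressed in
the subtraction-free form `∫_B Y⁺ + ∫_B X⁻ = ∫_B X⁺ + ∫_B Y⁻`. -/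
def IsCondExp {m : MeasurableSpace Ω} (G : MeasurableSpace Ω) (P : @Measure Ω m)
    (X Y : Ω → EReal) : Prop :=
  Measurable[G] Y ∧ ∀ B : Set Ω, MeasurableSet[G] B →
    (∫⁻ ω in B, epos (Y ω) ∂P) + (∫⁻ ω in B, eneg (X ω) ∂P) =
      (∫⁻ ω in B, epos (X ω) ∂P) + (∫⁻ ω in B, eneg (Y ω) ∂P)

/-- `Z` is a `P`-essential supremum of the family `F`: it is an a.s. upper bound of the
family which is a.s. below any other a.s. upper bound. -/
def IsEssSup {ι : Type*} {m : MeasurableSpace Ω} (P : Measure Ω)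
    (F : ι → Ω → EReal) (Z : Ω → EReal) : Prop :=
  (∀ i, ∀ᵐ ω ∂P, F i ω ≤ Z ω) ∧
    ∀ W : Ω → EReal, (∀ i, ∀ᵐ ω ∂P, F i ω ≤ W ω) → ∀ᵐ ω ∂P, Z ω ≤ W ω

variable {mΩ : MeasurableSpace Ω}

/-- Signed integral of an `EReal` function, as a real number (junk if parts are infinite). -/
noncomputable def Jint (μ : Measure Ω) (f : Ω → EReal) : ℝ :=
  (∫⁻ ω, epos (f ω) ∂μ).toReal - (∫⁻ ω, eneg (f ω) ∂μ).toReal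

lemma Jint_le {μ : Measure Ω} [IsFiniteMeasure μ] {f g : Ω → EReal} {c : ℝ}
    (hf : Measurable f) (hg : Measurable g)
    (hfp : ∫⁻ ω, epos (f ω) ∂μ ≠ ⊤) (hfn : ∫⁻ ω, eneg (f ω) ∂μ ≠ ⊤)
    (hgp : ∫⁻ ω, epos (g ω) ∂μ ≠ ⊤) (hgn : ∫⁻ ω, eneg (g ω) ∂μ ≠ ⊤)
    (h : ∀ᵐ ω ∂μ, f ω ≤ g ω + (c : EReal)) :
    Jint μ f ≤ Jint μ g + c * (μ Set.univ).toReal := by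
  have key : ∀ᵐ ω ∂μ, epos (f ω) + eneg (g ω) + ENNReal.ofReal (-c)
      ≤ epos (g ω) + eneg (f ω) + ENNReal.ofReal c := h.mono fun ω hω => key_pt hω
  have hI := lintegral_mono_ae key
  have hmf : Measurable fun ω => epos (f ω) := measurable_epos.comp hf
  have hmg : Measurable fun ω => epos (g ω) := measurable_epos.comp hg
  rw [lintegral_add_right _ measurable_const, lintegral_add_right _ measurable_const,
    lintegral_add_left hmf, lintegral_add_left hmg,
    lintegral_const, lintegral_const] at hI
  set A := ∫⁻ ω, epos (f ω) ∂μ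
  set B := ∫⁻ ω, eneg (f ω) ∂μ
  set C := ∫⁻ ω, epos (g ω) ∂μ
  set D := ∫⁻ ω, eneg (g ω) ∂μ
  have hu : μ Set.univ ≠ ⊤ := measure_ne_top μ _
  have h1 : ((A + D + ENNReal.ofReal (-c) * μ Set.univ)).toReal
      ≤ ((C + B + ENNReal.ofReal c * μ Set.univ)).toReal := by
    apply ENNReal.toReal_mono _ hI
    exact ENNReal.add_ne_top.2 ⟨ENNReal.add_ne_top.2 ⟨hgp, hfn⟩, ENNReal.mul_ne_top
      ENNReal.ofReal_ne_top hu⟩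
  rw [ENNReal.toReal_add (ENNReal.add_ne_top.2 ⟨hfp, hgn⟩) (ENNReal.mul_ne_top
      ENNReal.ofReal_ne_top hu), ENNReal.toReal_add hfp hgn,
    ENNReal.toReal_add (ENNReal.add_ne_top.2 ⟨hgp, hfn⟩) (ENNReal.mul_ne_top
      ENNReal.ofReal_ne_top hu), ENNReal.toReal_add hgp hfn,
    ENNReal.toReal_mul, ENNReal.toReal_mul, ENNReal.toReal_ofReal', ENNReal.toReal_ofReal']
      at h1
  have hc := max_sub_max_neg c
  have hu0 : (0:ℝ) ≤ (μ Set.univ).toReal := ENNReal.toReal_nonneg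
  unfold Jint
  nlinarith [mul_le_mul_of_nonneg_right (le_of_eq hc.symm) hu0]

lemma Jint_eq {μ : Measure Ω} {f g : Ω → EReal}
    (hfp : ∫⁻ ω, epos (f ω) ∂μ ≠ ⊤) (hfn : ∫⁻ ω, eneg (f ω) ∂μ ≠ ⊤)
    (hgp : ∫⁻ ω, epos (g ω) ∂μ ≠ ⊤) (hgn : ∫⁻ ω, eneg (g ω) ∂μ ≠ ⊤)
    (heq : (∫⁻ ω, epos (f ω) ∂μ) + (∫⁻ ω, eneg (g ω) ∂μ)
      = (∫⁻ ω, epos (g ω) ∂μ) + (∫⁻ ω, eneg (f ω) ∂μ)) :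
    Jint μ f = Jint μ g := by
  have h1 := congrArg ENNReal.toReal heq
  rw [ENNReal.toReal_add hfp hgn, ENNReal.toReal_add hgp hfn] at h1
  unfold Jint
  linarith

lemma Jint_const {μ : Measure Ω} [IsFiniteMeasure μ] (c : ℝ) :
    Jint μ (fun _ => (c : EReal)) = c * (μ Set.univ).toReal := by
  unfold Jint
  simp only [epos_coe, eneg_coe, lintegral_const]
  rw [ENNReal.toReal_mul, ENNReal.toReal_mul, ENNReal.toReal_ofReal', ENNReal.toReal_ofReal']
  have := max_sub_max_neg c
  nlinarith [ENNReal.toReal_nonneg (a := μ Set.univ)]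

lemma Jint_union {μ : Measure Ω} {C D : Set Ω} (hC : MeasurableSet C) (hD : MeasurableSet D)
    (hdisj : Disjoint C D) (f : Ω → EReal)
    (hp : ∫⁻ ω in C ∪ D, epos (f ω) ∂μ ≠ ⊤) (hn : ∫⁻ ω in C ∪ D, eneg (f ω) ∂μ ≠ ⊤) :
    Jint (μ.restrict (C ∪ D)) f = Jint (μ.restrict C) f + Jint (μ.restrict D) f := by
  have hpu := lintegral_union hD hdisj (f := fun ω => epos (f ω)) (μ := μ)
  have hnu := lintegral_union hD hdisj (f := fun ω => eneg (f ω)) (μ := μ)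
  have hpC : ∫⁻ ω in C, epos (f ω) ∂μ ≠ ⊤ := by
    refine ne_top_of_le_ne_top hp ?_
    exact lintegral_mono' (Measure.restrict_mono subset_union_left le_rfl) le_rfl
  have hnC : ∫⁻ ω in C, eneg (f ω) ∂μ ≠ ⊤ := by
    refine ne_top_of_le_ne_top hn ?_
    exact lintegral_mono' (Measure.restrict_mono subset_union_left le_rfl) le_rfl
  have hpD : ∫⁻ ω in D, epos (f ω) ∂μ ≠ ⊤ := by
    refine ne_top_of_le_ne_top hp ?_
    exact lintegral_mono' (Measure.restrict_mono subset_union_right le_rfl) le_rfl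
  have hnD : ∫⁻ ω in D, eneg (f ω) ∂μ ≠ ⊤ := by
    refine ne_top_of_le_ne_top hn ?_
    exact lintegral_mono' (Measure.restrict_mono subset_union_right le_rfl) le_rfl
  unfold Jint
  rw [hpu, hnu, ENNReal.toReal_add hpC hpD, ENNReal.toReal_add hnC hnD]
  ring

lemma Jint_iSup_le {μ : Measure Ω} {g : ℕ → Ω → EReal} {c : ℝ}
    (hg : ∀ n, Measurable (g n)) (hmono : ∀ ω, Monotone fun n => g n ω)
    (hP : (∫⁻ ω, epos (⨆ n, g n ω) ∂μ) ≠ ⊤) (hN : (∫⁻ ω, eneg (g 0 ω) ∂μ) ≠ ⊤)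
    (hc : ∀ n, Jint μ (g n) ≤ c) : Jint μ (fun ω => ⨆ n, g n ω) ≤ c := by
  have hgm : ∀ n, Measurable fun ω => epos (g n ω) := fun n => measurable_epos.comp (hg n)
  have hgn : ∀ n, Measurable fun ω => eneg (g n ω) := fun n => measurable_eneg.comp (hg n)
  have hepos : ∫⁻ ω, epos (⨆ n, g n ω) ∂μ = ⨆ n, ∫⁻ ω, epos (g n ω) ∂μ := by
    rw [← lintegral_iSup hgm fun i j hij ω => epos_mono (hmono ω hij)]
    congr with ω
    exact epos_iSup (hmono ω)
  have heneg : ∫⁻ ω, eneg (⨆ n, g n ω) ∂μ = ⨅ n, ∫⁻ ω, eneg (g n ω) ∂μ := by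
    rw [← lintegral_iInf hgn (fun i j hij ω => eneg_anti (hmono ω hij)) hN]
    congr with ω
    exact eneg_iSup (hmono ω)
  have hmonoI : Monotone fun n => ∫⁻ ω, epos (g n ω) ∂μ :=
    fun i j hij => lintegral_mono fun ω => epos_mono (hmono ω hij)
  have hantiI : Antitone fun n => ∫⁻ ω, eneg (g n ω) ∂μ :=
    fun i j hij => lintegral_mono fun ω => eneg_anti (hmono ω hij)
  have hiInf_ne : (⨅ n, ∫⁻ ω, eneg (g n ω) ∂μ) ≠ ⊤ :=
    ne_top_of_le_ne_top hN (iInf_le _ 0)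
  have t1 : Tendsto (fun n => (∫⁻ ω, epos (g n ω) ∂μ).toReal) atTop
      (nhds ((∫⁻ ω, epos (⨆ n, g n ω) ∂μ)).toReal) := by
    rw [hepos]
    exact (ENNReal.tendsto_toReal (hepos ▸ hP)).comp (tendsto_atTop_iSup hmonoI)
  have t2 : Tendsto (fun n => (∫⁻ ω, eneg (g n ω) ∂μ).toReal) atTop
      (nhds ((∫⁻ ω, eneg (⨆ n, g n ω) ∂μ)).toReal) := by
    rw [heneg]
    exact (ENNReal.tendsto_toReal hiInf_ne).comp (tendsto_atTop_iInf hantiI)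
  have t3 : Tendsto (fun n => Jint μ (g n)) atTop (nhds (Jint μ (fun ω => ⨆ n, g n ω))) :=
    t1.sub t2
  exact le_of_tendsto' t3 hc

lemma lint_ne_top_of_ae_le {μ : Measure Ω} [IsFiniteMeasure μ] {F : Ω → ENNReal} {c : ENNReal}
    (hc : c ≠ ⊤) (h : ∀ᵐ ω ∂μ, F ω ≤ c) : ∫⁻ ω, F ω ∂μ ≠ ⊤ := by
  have h2 := lintegral_mono_ae h
  rw [lintegral_const] at h2
  exact ne_top_of_le_ne_top (ENNReal.mul_ne_top hc (measure_ne_top μ _)) h2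

lemma ae_le_of_rat_pairs {μ : Measure Ω} {f g : Ω → EReal}
    (h : ∀ q q' : ℚ, (q : ℝ) < (q' : ℝ) →
      μ ({ω | g ω < ((q : ℝ) : EReal)} ∩ {ω | ((q' : ℝ) : EReal) < f ω}) = 0) :
    ∀ᵐ ω ∂μ, f ω ≤ g ω := by
  rw [ae_iff]
  refine measure_mono_null (t := ⋃ p : ℚ × ℚ, if (p.1 : ℝ) < (p.2 : ℝ) then
    ({ω | g ω < ((p.1 : ℝ) : EReal)} ∩ {ω | ((p.2 : ℝ) : EReal) < f ω}) else ∅) ?_ ?_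
  · intro ω hω
    simp only [Set.mem_setOf_eq, not_le] at hω
    obtain ⟨q, hq1, hq2⟩ := EReal.exists_rat_btwn_of_lt hω
    obtain ⟨q', hq'1, hq'2⟩ := EReal.exists_rat_btwn_of_lt hq2
    have hqq' : (q : ℝ) < (q' : ℝ) := by exact_mod_cast hq'1
    refine Set.mem_iUnion.2 ⟨(q, q'), ?_⟩
    rw [if_pos hqq']
    exact ⟨hq1, hq'2⟩
  · exact measure_iUnion_null fun p => by
      split_ifs with hp
      exacts [h p.1 p.2 hp, measure_empty]


lemma Jint_le0 {μ : Measure Ω} [IsFiniteMeasure μ] {f g : Ω → EReal}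
    (hf : Measurable f) (hg : Measurable g)
    (hfp : ∫⁻ ω, epos (f ω) ∂μ ≠ ⊤) (hfn : ∫⁻ ω, eneg (f ω) ∂μ ≠ ⊤)
    (hgp : ∫⁻ ω, epos (g ω) ∂μ ≠ ⊤) (hgn : ∫⁻ ω, eneg (g ω) ∂μ ≠ ⊤)
    (h : ∀ᵐ ω ∂μ, f ω ≤ g ω) : Jint μ f ≤ Jint μ g := by
  have := Jint_le (c := 0) hf hg hfp hfn hgp hgn
    (h.mono fun ω hω => by rw [EReal.coe_zero, add_zero]; exact hω)
  simpa using this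

/-- Monotonicity of conditional expectations in the `IsCondExp` sense. -/
lemma isCondExp_mono {m : MeasurableSpace Ω} {P : @Measure Ω m} [IsProbabilityMeasure P]
    {G : MeasurableSpace Ω} (hG : G ≤ m) {X₁ X₂ Y₁ Y₂ : Ω → EReal}
    (hX₁ : Measurable[m] X₁) (hX₂ : Measurable[m] X₂)
    (hn₁ : (∫⁻ ω, eneg (X₁ ω) ∂P) ≠ ⊤) (hn₂ : (∫⁻ ω, eneg (X₂ ω) ∂P) ≠ ⊤)
    (h1 : IsCondExp G P X₁ Y₁) (h2 : IsCondExp G P X₂ Y₂)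
    (hle : ∀ᵐ ω ∂P, X₁ ω ≤ X₂ ω) : ∀ᵐ ω ∂P, Y₁ ω ≤ Y₂ ω := by
  have hY₁ : Measurable[m] Y₁ := h1.1.mono hG le_rfl
  have hY₂ : Measurable[m] Y₂ := h2.1.mono hG le_rfl
  apply ae_le_of_rat_pairs
  intro q q' hqq'
  have hBG : MeasurableSet[G]
      ({ω | Y₂ ω < ((q : ℝ) : EReal)} ∩ {ω | ((q' : ℝ) : EReal) < Y₁ ω}) :=
    (measurableSet_lt h2.1 measurable_const).inter (measurableSet_lt measurable_const h1.1)
  set B := ({ω | Y₂ ω < ((q : ℝ) : EReal)} ∩ {ω | ((q' : ℝ) : EReal) < Y₁ ω})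
  have hBm : MeasurableSet[m] B := hG _ hBG
  have hmem : ∀ᵐ ω ∂(P.restrict B), ω ∈ B := ae_restrict_mem hBm
  -- finiteness of the relevant integrals over B
  have hY₂p : (∫⁻ ω, epos (Y₂ ω) ∂(P.restrict B)) ≠ ⊤ :=
    lint_ne_top_of_ae_le ENNReal.ofReal_ne_top
      (hmem.mono fun ω hω => (epos_coe q ▸ epos_mono hω.1.le : epos (Y₂ ω) ≤ ENNReal.ofReal q))
  have hY₁n : (∫⁻ ω, eneg (Y₁ ω) ∂(P.restrict B)) ≠ ⊤ :=
    lint_ne_top_of_ae_le ENNReal.ofReal_ne_top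
      (hmem.mono fun ω hω =>
        (eneg_coe q' ▸ eneg_anti hω.2.le : eneg (Y₁ ω) ≤ ENNReal.ofReal (-q')))
  have hX₁n : (∫⁻ ω, eneg (X₁ ω) ∂(P.restrict B)) ≠ ⊤ :=
    ne_top_of_le_ne_top hn₁ (lintegral_mono' Measure.restrict_le_self le_rfl)
  have hX₂n : (∫⁻ ω, eneg (X₂ ω) ∂(P.restrict B)) ≠ ⊤ :=
    ne_top_of_le_ne_top hn₂ (lintegral_mono' Measure.restrict_le_self le_rfl)
  have e1 := h1.2 B hBG
  have e2 := h2.2 B hBG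
  have hsum2 : (∫⁻ ω in B, epos (X₂ ω) ∂P) + (∫⁻ ω in B, eneg (Y₂ ω) ∂P) ≠ ⊤ := by
    rw [← e2]; exact ENNReal.add_ne_top.2 ⟨hY₂p, hX₂n⟩
  have hX₂p : (∫⁻ ω, epos (X₂ ω) ∂(P.restrict B)) ≠ ⊤ := (ENNReal.add_ne_top.1 hsum2).1
  have hY₂n : (∫⁻ ω, eneg (Y₂ ω) ∂(P.restrict B)) ≠ ⊤ := (ENNReal.add_ne_top.1 hsum2).2
  have hleB : ∀ᵐ ω ∂(P.restrict B), X₁ ω ≤ X₂ ω := ae_restrict_of_ae hle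
  have hX₁p : (∫⁻ ω, epos (X₁ ω) ∂(P.restrict B)) ≠ ⊤ :=
    ne_top_of_le_ne_top hX₂p (lintegral_mono_ae (hleB.mono fun ω hω => epos_mono hω))
  have hsum1 : (∫⁻ ω in B, epos (Y₁ ω) ∂P) + (∫⁻ ω in B, eneg (X₁ ω) ∂P) ≠ ⊤ := by
    rw [e1]; exact ENNReal.add_ne_top.2 ⟨hX₁p, hY₁n⟩
  have hY₁p : (∫⁻ ω, epos (Y₁ ω) ∂(P.restrict B)) ≠ ⊤ := (ENNReal.add_ne_top.1 hsum1).1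
  -- the chain of inequalities
  have c1 : (q' : ℝ) * ((P.restrict B) Set.univ).toReal ≤ Jint (P.restrict B) Y₁ := by
    have := Jint_le0 (f := fun _ => ((q' : ℝ) : EReal)) (g := Y₁) measurable_const hY₁
      (by rw [lintegral_const]; exact ENNReal.mul_ne_top ((epos_coe q').symm ▸
        ENNReal.ofReal_ne_top) (measure_ne_top _ _))
      (by rw [lintegral_const]; exact ENNReal.mul_ne_top ((eneg_coe q').symm ▸
        ENNReal.ofReal_ne_top) (measure_ne_top _ _))
      hY₁p hY₁n (hmem.mono fun ω hω => hω.2.le)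
    rwa [Jint_const] at this
  have c2 : Jint (P.restrict B) Y₁ = Jint (P.restrict B) X₁ := Jint_eq hY₁p hY₁n hX₁p hX₁n e1
  have c3 : Jint (P.restrict B) X₁ ≤ Jint (P.restrict B) X₂ :=
    Jint_le0 hX₁ hX₂ hX₁p hX₁n hX₂p hX₂n hleB
  have c4 : Jint (P.restrict B) X₂ = Jint (P.restrict B) Y₂ := (Jint_eq hY₂p hY₂n hX₂p hX₂n e2).symm
  have c5 : Jint (P.restrict B) Y₂ ≤ (q : ℝ) * ((P.restrict B) Set.univ).toReal := by
    have := Jint_le0 (f := Y₂) (g := fun _ => ((q : ℝ) : EReal)) hY₂ measurable_const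
      hY₂p hY₂n
      (by rw [lintegral_const]; exact ENNReal.mul_ne_top ((epos_coe q).symm ▸
        ENNReal.ofReal_ne_top) (measure_ne_top _ _))
      (by rw [lintegral_const]; exact ENNReal.mul_ne_top ((eneg_coe q).symm ▸
        ENNReal.ofReal_ne_top) (measure_ne_top _ _))
      (hmem.mono fun ω hω => hω.1.le)
    rwa [Jint_const] at this
  have hu0 : (0:ℝ) ≤ ((P.restrict B) Set.univ).toReal := ENNReal.toReal_nonneg
  have hu : ((P.restrict B) Set.univ).toReal = 0 := by nlinarith
  rw [Measure.restrict_apply_univ] at hu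
  rcases (ENNReal.toReal_eq_zero_iff _).1 hu with h0 | h0
  · exact h0
  · exact absurd h0 (measure_ne_top P B)

lemma ereal_shift {a b : EReal} {d c : ℝ} (h : a + (d : EReal) ≤ b + (c : EReal)) :
    a ≤ b + ((c - d : ℝ) : EReal) := by
  have h2 : a + (d : EReal) - (d : EReal) ≤ b + (c : EReal) - (d : EReal) :=
    EReal.sub_le_sub h (le_refl _)
  rw [EReal.add_sub_cancel_right] at h2
  calc a ≤ b + (c : EReal) - (d : EReal) := h2
  _ = b + ((c - d : ℝ) : EReal) := by
      rw [sub_eq_add_neg, add_assoc, ← EReal.coe_neg, ← EReal.coe_add, sub_eq_add_neg]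

lemma fin_epos_min {μ : Measure Ω} [IsFiniteMeasure μ] (M : ℝ) (f : Ω → EReal) :
    (∫⁻ ω, epos (min (M : EReal) (f ω)) ∂μ) ≠ ⊤ :=
  lint_ne_top_of_ae_le ENNReal.ofReal_ne_top
    (Filter.Eventually.of_forall fun ω => epos_coe M ▸ epos_mono (min_le_left _ _))

lemma fin_eneg_min {m : MeasurableSpace Ω} {P : @Measure Ω m} {s : Set Ω} {M : ℝ} (hM : 0 ≤ M)
    (f : Ω → EReal) (h : (∫⁻ ω, eneg (f ω) ∂P) ≠ ⊤) :
    (∫⁻ ω, eneg (min (M : EReal) (f ω)) ∂(P.restrict s)) ≠ ⊤ := by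
  have heq : (fun ω => eneg (min (M : EReal) (f ω))) = fun ω => eneg (f ω) :=
    funext fun ω => eneg_min_coe hM _
  rw [heq]
  exact ne_top_of_le_ne_top h (lintegral_mono' Measure.restrict_le_self le_rfl)

lemma fin_epos_const {μ : Measure Ω} [IsFiniteMeasure μ] (c : ℝ) :
    (∫⁻ _ω, epos ((c : ℝ) : EReal) ∂μ) ≠ ⊤ := by
  rw [epos_coe, lintegral_const]
  exact ENNReal.mul_ne_top ENNReal.ofReal_ne_top (measure_ne_top μ _)

lemma fin_eneg_const {μ : Measure Ω} [IsFiniteMeasure μ] (c : ℝ) :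
    (∫⁻ _ω, eneg ((c : ℝ) : EReal) ∂μ) ≠ ⊤ := by
  rw [eneg_coe, lintegral_const]
  exact ENNReal.mul_ne_top ENNReal.ofReal_ne_top (measure_ne_top μ _)

/-- The per-index chain bound: `∫_B (M ⊓ X l) ≤ q·P(B)` when `W < q` on `B`. -/
lemma Tl_le {Λ : Type*} {m : MeasurableSpace Ω} {P : @Measure Ω m} [IsProbabilityMeasure P]
    {G : MeasurableSpace Ω} (hG : G ≤ m)
    {X : Λ → Ω → EReal} (hX : ∀ l, Measurable[m] (X l))
    (hneg : ∀ l, (∫⁻ ω, eneg (X l ω) ∂P) < ⊤)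
    {k : Λ → Ω → EReal} (hk : ∀ l, IsCondExp G P (X l) (k l))
    {W : Ω → EReal} (hWm : Measurable[m] W) (hW1 : ∀ l, ∀ᵐ ω ∂P, k l ω ≤ W ω)
    {B : Set Ω} (hBG : MeasurableSet[G] B) {q : ℝ} (hBW : ∀ ω ∈ B, W ω < (q : EReal))
    (l₀ : Λ) {M : ℝ} (hM : 0 < M) (l : Λ) :
    Jint (P.restrict B) (fun ω => min (M : EReal) (X l ω))
      ≤ q * ((P.restrict B) Set.univ).toReal := by
  have hBm : MeasurableSet[m] B := hG _ hBG
  have hmem : ∀ᵐ ω ∂(P.restrict B), ω ∈ B := ae_restrict_mem hBm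
  have hkm : ∀ l', Measurable[m] (k l') := fun l' => (hk l').1.mono hG le_rfl
  -- finiteness facts for each index
  have hklp : ∀ l', (∫⁻ ω, epos (k l' ω) ∂(P.restrict B)) ≠ ⊤ := by
    intro l'
    refine lint_ne_top_of_ae_le (c := ENNReal.ofReal q) ENNReal.ofReal_ne_top ?_
    filter_upwards [hmem, ae_restrict_of_ae (hW1 l')] with ω h1 h2
    exact epos_coe q ▸ epos_mono (h2.trans_lt (hBW ω h1)).le
  have hXln : ∀ l', (∫⁻ ω, eneg (X l' ω) ∂(P.restrict B)) ≠ ⊤ := fun l' =>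
    ne_top_of_le_ne_top (hneg l').ne (lintegral_mono' Measure.restrict_le_self le_rfl)
  have haux : ∀ l', (∫⁻ ω, epos (X l' ω) ∂(P.restrict B)) ≠ ⊤ ∧
      (∫⁻ ω, eneg (k l' ω) ∂(P.restrict B)) ≠ ⊤ := by
    intro l'
    have e := (hk l').2 B hBG
    have hsum : (∫⁻ ω in B, epos (X l' ω) ∂P) + (∫⁻ ω in B, eneg (k l' ω) ∂P) ≠ ⊤ := by
      rw [← e]; exact ENNReal.add_ne_top.2 ⟨hklp l', hXln l'⟩
    exact ENNReal.add_ne_top.1 hsum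
  have hWp : (∫⁻ ω, epos (W ω) ∂(P.restrict B)) ≠ ⊤ := by
    refine lint_ne_top_of_ae_le (c := ENNReal.ofReal q) ENNReal.ofReal_ne_top ?_
    filter_upwards [hmem] with ω h1
    exact epos_coe q ▸ epos_mono (hBW ω h1).le
  have hWn : (∫⁻ ω, eneg (W ω) ∂(P.restrict B)) ≠ ⊤ := by
    refine ne_top_of_le_ne_top (haux l₀).2 (lintegral_mono_ae ?_)
    filter_upwards [ae_restrict_of_ae (hW1 l₀)] with ω h1
    exact eneg_anti h1
  -- the chain
  have c1 : Jint (P.restrict B) (fun ω => min (M : EReal) (X l ω))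
      ≤ Jint (P.restrict B) (X l) :=
    Jint_le0 (measurable_const.min (hX l)) (hX l) (fin_epos_min M (X l))
      (fin_eneg_min hM.le (X l) (hneg l).ne) (haux l).1 (hXln l)
      (Filter.Eventually.of_forall fun ω => min_le_right _ _)
  have c2 : Jint (P.restrict B) (X l) = Jint (P.restrict B) (k l) :=
    (Jint_eq (hklp l) (haux l).2 (haux l).1 (hXln l) ((hk l).2 B hBG)).symm
  have c3 : Jint (P.restrict B) (k l) ≤ Jint (P.restrict B) W :=
    Jint_le0 (hkm l) hWm (hklp l) (haux l).2 hWp hWn (ae_restrict_of_ae (hW1 l))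
  have c4 : Jint (P.restrict B) W ≤ q * ((P.restrict B) Set.univ).toReal := by
    have := Jint_le0 (f := W) (g := fun _ => ((q : ℝ) : EReal)) hWm measurable_const
      hWp hWn (fin_epos_const q) (fin_eneg_const q) (hmem.mono fun ω h => (hBW ω h).le)
    rwa [Jint_const] at this
  linarith

lemma geom_sum_bound (ε : ℝ) (hε : 0 ≤ ε) (n : ℕ) :
    (∑ i ∈ Finset.range n, ε / 2 ^ (i + 1) : ℝ) ≤ ε := by
  have key : ∀ n : ℕ, (∑ i ∈ Finset.range n, ε / 2 ^ (i + 1) : ℝ) = ε * (1 - (1 / 2) ^ n) := by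
    intro n
    induction n with
    | zero => simp
    | succ n ih =>
      rw [Finset.sum_range_succ, ih]
      have h2 : ((1 : ℝ) / 2) ^ (n + 1) = 1 / 2 ^ (n + 1) := by rw [div_pow, one_pow]
      have h3 : ((1 : ℝ) / 2) ^ n = 1 / 2 ^ n := by rw [div_pow, one_pow]
      have h5 : (2 : ℝ) ^ n ≠ 0 := by positivity
      rw [h2, h3, pow_succ]
      field_simp
      ring
  rw [key n]
  have h6 : (0 : ℝ) ≤ (1 / 2 : ℝ) ^ n := by positivity
  nlinarith

set_option maxHeartbeats 1000000 in
/-- Main truncation bound: `∫_B (M ⊓ Z) ≤ q·P(B)` under the lattice property. -/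
lemma trunc_bound {Λ : Type*} [Nonempty Λ] {m : MeasurableSpace Ω} {P : @Measure Ω m}
    [IsProbabilityMeasure P] {G : MeasurableSpace Ω} (hG : G ≤ m)
    {X : Λ → Ω → EReal} (hX : ∀ l, Measurable[m] (X l))
    (hneg : ∀ l, (∫⁻ ω, eneg (X l ω) ∂P) < ⊤)
    (hlat : ∀ ε : ℝ, 0 < ε → ∀ M : ℝ, 0 < M → ∀ l l' : Λ, ∃ l'' : Λ,
      ∀ᵐ ω ∂P, ((M : EReal) ⊓ X l ω) ⊔ ((M : EReal) ⊓ X l' ω) - (ε : EReal) ≤ X l'' ω)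
    {Z : Ω → EReal} (hZmeas : Measurable[m] Z) (hZ : IsEssSup P X Z)
    (hnegZ : (∫⁻ ω, eneg (Z ω) ∂P) ≠ ⊤)
    {k : Λ → Ω → EReal} (hk : ∀ l, IsCondExp G P (X l) (k l))
    {W : Ω → EReal} (hWm : Measurable[m] W) (hW1 : ∀ l, ∀ᵐ ω ∂P, k l ω ≤ W ω)
    {B : Set Ω} (hBG : MeasurableSet[G] B) {q : ℝ} (hBW : ∀ ω ∈ B, W ω < (q : EReal))
    {M : ℝ} (hM : 0 < M) :
    Jint (P.restrict B) (fun ω => min (M : EReal) (Z ω))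
      ≤ q * ((P.restrict B) Set.univ).toReal := by
  classical
  obtain ⟨l₀⟩ := ‹Nonempty Λ›
  have hBm : MeasurableSet[m] B := hG _ hBG
  set u := ((P.restrict B) Set.univ).toReal with hu_def
  have hu0 : 0 ≤ u := ENNReal.toReal_nonneg
  have hu1 : u ≤ 1 := by
    rw [hu_def, Measure.restrict_apply_univ]
    calc (P B).toReal ≤ (1 : ENNReal).toReal := ENNReal.toReal_mono ENNReal.one_ne_top prob_le_one
    _ = 1 := by simp
  -- upgraded witness form of the lattice property
  have hwit : ∀ (l l' : Λ) (δ : ℝ), 0 < δ → ∃ l'', ∀ᵐ ω ∂P,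
      (min (M : EReal) (X l ω)) ⊔ (min (M : EReal) (X l' ω))
        ≤ min (M : EReal) (X l'' ω) + ((δ : ℝ) : EReal) := by
    intro l l' δ hδ
    obtain ⟨l'', hl''⟩ := hlat δ hδ M hM l l'
    refine ⟨l'', hl''.mono fun ω hω => ?_⟩
    change (min (M : EReal) (X l ω)) ⊔ (min (M : EReal) (X l' ω)) - (δ : EReal) ≤ X l'' ω at hω
    have h1 : (min (M : EReal) (X l ω)) ⊔ (min (M : EReal) (X l' ω))
        ≤ X l'' ω + (δ : EReal) :=
      (EReal.sub_le_iff_le_add (Or.inl (EReal.coe_ne_bot δ))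
        (Or.inl (EReal.coe_ne_top δ))).1 hω
    rcases le_total (X l'' ω) ((M : ℝ) : EReal) with hc | hc
    · rw [min_eq_right hc]; exact h1
    · rw [min_eq_left hc]
      calc (min (M : EReal) (X l ω)) ⊔ (min (M : EReal) (X l' ω))
          ≤ (M : EReal) := sup_le (min_le_left _ _) (min_le_left _ _)
      _ ≤ (M : EReal) + (δ : EReal) := le_add_of_nonneg_right (by exact_mod_cast hδ.le)
  -- the supremum of truncated integrals
  set T : Λ → ℝ := fun l => Jint (P.restrict B) (fun ω => min (M : EReal) (X l ω)) with hT_def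
  have hTle : ∀ l, T l ≤ q * u := fun l => Tl_le hG hX hneg hk hWm hW1 hBG hBW l₀ hM l
  have hbdd : BddAbove (Set.range T) := ⟨q * u, by rintro _ ⟨l, rfl⟩; exact hTle l⟩
  set S := ⨆ l, T l with hS_def
  have hTS : ∀ l, T l ≤ S := fun l => le_ciSup hbdd l
  have hSle : S ≤ q * u := ciSup_le hTle
  have key : ∀ ε : ℝ, 0 < ε →
      Jint (P.restrict B) (fun ω => min (M : EReal) (Z ω)) ≤ S + ε * u := by
    intro ε hε
    -- near-maximizing sequence
    have hlseq_ex : ∀ n : ℕ, ∃ l, S - 1 / ((n : ℝ) + 1) < T l := by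
      intro n
      have h1 : (0 : ℝ) < 1 / ((n : ℝ) + 1) := by positivity
      exact exists_lt_of_lt_ciSup (by linarith)
    choose lseq hlseq using hlseq_ex
    -- recursive witnesses
    have hwitn : ∀ (p : Λ × Λ) (n : ℕ), ∃ l'', ∀ᵐ ω ∂P,
        (min (M : EReal) (X p.1 ω)) ⊔ (min (M : EReal) (X p.2 ω))
          ≤ min (M : EReal) (X l'' ω) + ((ε / 2 ^ (n + 1) : ℝ) : EReal) :=
      fun p n => hwit p.1 p.2 _ (by positivity)
    choose wit hwitspec using hwitn
    set rseq : ℕ → Λ := fun n => Nat.rec (lseq 0) (fun n r => wit (r, lseq (n + 1)) n) n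
      with hrseq_def
    set f : ℕ → Ω → EReal := fun n ω => min (M : EReal) (X (rseq n) ω) with hf_def
    have hfm : ∀ n, Measurable[m] (f n) := fun n => measurable_const.min (hX _)
    have hstep : ∀ n, ∀ᵐ ω ∂P,
        (f n ω ⊔ min (M : EReal) (X (lseq (n + 1)) ω))
          ≤ f (n + 1) ω + ((ε / 2 ^ (n + 1) : ℝ) : EReal) :=
      fun n => hwitspec (rseq n, lseq (n + 1)) n
    have hchain : ∀ᵐ ω ∂P, ∀ n,
        f n ω ≤ f (n + 1) ω + ((ε / 2 ^ (n + 1) : ℝ) : EReal) ∧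
        min (M : EReal) (X (lseq (n + 1)) ω) ≤ f (n + 1) ω + ((ε / 2 ^ (n + 1) : ℝ) : EReal) := by
      rw [ae_all_iff]
      exact fun n => (hstep n).mono fun ω h => ⟨le_sup_left.trans h, le_sup_right.trans h⟩
    have hchainε : ∀ᵐ ω ∂P, ∀ j n : ℕ, j ≤ n → f j ω ≤ f n ω + (ε : EReal) := by
      filter_upwards [hchain] with ω hω
      intro j n hjn
      have hsum : f j ω ≤ f n ω + ((∑ i ∈ Finset.Ico j n, ε / 2 ^ (i + 1) : ℝ) : EReal) := by
        induction n, hjn using Nat.le_induction with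
        | base => simp
        | succ n hjn ih =>
          calc f j ω ≤ f n ω + ((∑ i ∈ Finset.Ico j n, ε / 2 ^ (i + 1) : ℝ) : EReal) := ih
          _ ≤ (f (n + 1) ω + ((ε / 2 ^ (n + 1) : ℝ) : EReal))
              + ((∑ i ∈ Finset.Ico j n, ε / 2 ^ (i + 1) : ℝ) : EReal) :=
            add_le_add_left (hω n).1 _
          _ = f (n + 1) ω + ((∑ i ∈ Finset.Ico j (n + 1), ε / 2 ^ (i + 1) : ℝ) : EReal) := by
            rw [add_assoc, ← EReal.coe_add]
            congr 1
            rw [EReal.coe_eq_coe_iff, Finset.sum_Ico_succ_top hjn]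
            ring
      refine hsum.trans (add_le_add_right ?_ _)
      have hsb : (∑ i ∈ Finset.Ico j n, ε / 2 ^ (i + 1) : ℝ) ≤ ε := by
        have h1 : (∑ i ∈ Finset.Ico j n, ε / 2 ^ (i + 1) : ℝ)
            ≤ ∑ i ∈ Finset.range n, ε / 2 ^ (i + 1) := by
          apply Finset.sum_le_sum_of_subset_of_nonneg
          · intro i hi
            exact Finset.mem_range.2 (Finset.mem_Ico.1 hi).2
          · intro i _ _
            exact div_nonneg hε.le (by positivity)
        exact h1.trans (geom_sum_bound ε hε.le n)
      exact_mod_cast hsb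
    -- the partial suprema and their limit
    set g : ℕ → Ω → EReal := fun n ω => ⨆ i : Fin (n + 1), f i ω with hg_def
    have hgm : ∀ n, Measurable[m] (g n) := fun n => Measurable.iSup fun i => hfm i
    have hgmono : ∀ ω, Monotone fun n => g n ω := by
      intro ω i j hij
      exact iSup_le fun a => le_iSup_of_le ⟨a.1, by omega⟩ le_rfl
    set V : Ω → EReal := fun ω => ⨆ n, g n ω with hV_def
    have hVm : Measurable[m] V := Measurable.iSup hgm
    have hfg : ∀ j n : ℕ, j ≤ n → ∀ ω, f j ω ≤ g n ω := fun j n hjn ω =>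
      le_iSup_of_le ⟨j, by omega⟩ le_rfl
    have hfV : ∀ n ω, f n ω ≤ V ω := fun n ω => (hfg n n le_rfl ω).trans (le_iSup (fun n => g n ω) n)
    have hgM : ∀ n ω, g n ω ≤ (M : EReal) := fun n ω => iSup_le fun i => min_le_left _ _
    have hVM : ∀ ω, V ω ≤ (M : EReal) := fun ω => iSup_le fun n => hgM n ω
    have hgle : ∀ n, ∀ᵐ ω ∂P, g n ω ≤ f n ω + (ε : EReal) := fun n =>
      hchainε.mono fun ω hω => iSup_le fun i => hω i.1 n (by omega)
    -- finiteness over subsets of B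
    have hfLB : ∀ (s : Set Ω) (n : ℕ), (∫⁻ ω, eneg (f n ω) ∂(P.restrict s)) ≠ ⊤ :=
      fun s n => fin_eneg_min hM.le _ (hneg _).ne
    have hgP : ∀ n, (∫⁻ ω, epos (g n ω) ∂(P.restrict B)) ≠ ⊤ := fun n =>
      lint_ne_top_of_ae_le (c := ENNReal.ofReal M) ENNReal.ofReal_ne_top
        (Filter.Eventually.of_forall fun ω => epos_coe M ▸ epos_mono (hgM n ω))
    have hgN : ∀ n, (∫⁻ ω, eneg (g n ω) ∂(P.restrict B)) ≠ ⊤ := by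
      intro n
      refine ne_top_of_le_ne_top (hfLB B 0) (lintegral_mono fun ω => ?_)
      exact eneg_anti (hfg 0 n (by omega) ω)
    -- integral bounds for g and V
    have hJg : ∀ n, Jint (P.restrict B) (g n) ≤ S + ε * u := by
      intro n
      have h1 : Jint (P.restrict B) (g n) ≤ Jint (P.restrict B) (f n) + ε * u := by
        refine Jint_le (hgm n) (hfm n) (hgP n) (hgN n) (fin_epos_min M _) (hfLB B n) ?_
        exact ae_restrict_of_ae (hgle n)
      have h2 : Jint (P.restrict B) (f n) ≤ S := hTS (rseq n)
      linarith
    have hJV : Jint (P.restrict B) V ≤ S + ε * u := by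
      refine Jint_iSup_le hgm hgmono ?_ (hgN 0) hJg
      exact lint_ne_top_of_ae_le (c := ENNReal.ofReal M) ENNReal.ofReal_ne_top
        (Filter.Eventually.of_forall fun ω => epos_coe M ▸ epos_mono (hVM ω))
    -- domination of each truncated X l by V on B, a.e.
    have hdom : ∀ l, ∀ᵐ ω ∂P, ω ∈ B → min (M : EReal) (X l ω) ≤ V ω := by
      intro l
      have hC0 : ∀ δ : ℚ, 0 < (δ : ℝ) →
          P (B ∩ {ω | V ω + ((δ : ℝ) : EReal) ≤ min (M : EReal) (X l ω)}) = 0 := by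
        intro δ hδ
        have hCm : MeasurableSet[m]
            (B ∩ {ω | V ω + ((δ : ℝ) : EReal) ≤ min (M : EReal) (X l ω)}) :=
          hBm.inter (measurableSet_le
            ((Monotone.measurable (fun a b hab => add_le_add_left hab _)).comp hVm)
            (measurable_const.min (hX l)))
        set C := B ∩ {ω | V ω + ((δ : ℝ) : EReal) ≤ min (M : EReal) (X l ω)} with hC_def
        have hCB : C ⊆ B := Set.inter_subset_left
        have hDm : MeasurableSet[m] (B \ C) := hBm.diff hCm
        have hdis : Disjoint C (B \ C) := disjoint_sdiff_self_right
        have hCD : C ∪ (B \ C) = B := Set.union_diff_cancel hCB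
        have huCD : (P B).toReal = (P C).toReal + (P (B \ C)).toReal := by
          have h7 : P B = P C + P (B \ C) := by
            conv_lhs => rw [← hCD]
            exact measure_union hdis hDm
          rw [h7, ENNReal.toReal_add (measure_ne_top _ _) (measure_ne_top _ _)]
        have huB : u = (P B).toReal := by rw [hu_def, Measure.restrict_apply_univ]
        have hn : ∀ n : ℕ, (δ : ℝ) * (P C).toReal
            ≤ 1 / ((n : ℝ) + 2) + (ε / 2 ^ (n + 1)) * u + (1 / ((n : ℝ) + 1)) * u := by
          intro n
          obtain ⟨w, hw⟩ := hwit (rseq (n + 1)) l (1 / ((n : ℝ) + 1)) (by positivity)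
          have hA1 : Jint (P.restrict C) (f (n + 1))
              ≤ Jint (P.restrict C) (fun ω => min (M : EReal) (X w ω))
                + (1 / ((n : ℝ) + 1) - δ) * ((P.restrict C) Set.univ).toReal := by
            refine Jint_le (hfm (n + 1)) (measurable_const.min (hX w)) (fin_epos_min M _)
              (hfLB C (n + 1)) (fin_epos_min M _) (fin_eneg_min hM.le _ (hneg _).ne) ?_
            filter_upwards [ae_restrict_of_ae hw, ae_restrict_mem hCm] with ω h1 h2
            have h3 : V ω + ((δ : ℝ) : EReal) ≤ min (M : EReal) (X l ω) := h2.2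
            have h4 : f (n + 1) ω + ((δ : ℝ) : EReal)
                ≤ min (M : EReal) (X w ω) + ((1 / ((n : ℝ) + 1) : ℝ) : EReal) :=
              le_trans (add_le_add_left (hfV (n + 1) ω) _) (h3.trans (le_sup_right.trans h1))
            exact ereal_shift h4
          have hA2 : Jint (P.restrict (B \ C)) (f (n + 1))
              ≤ Jint (P.restrict (B \ C)) (fun ω => min (M : EReal) (X w ω))
                + (1 / ((n : ℝ) + 1)) * ((P.restrict (B \ C)) Set.univ).toReal := by
            refine Jint_le (hfm (n + 1)) (measurable_const.min (hX w)) (fin_epos_min M _)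
              (hfLB _ (n + 1)) (fin_epos_min M _) (fin_eneg_min hM.le _ (hneg _).ne) ?_
            exact ae_restrict_of_ae (hw.mono fun ω h1 => le_sup_left.trans h1)
          have hBCD : P.restrict B = P.restrict (C ∪ (B \ C)) := by rw [hCD]
          have hsplitf : Jint (P.restrict B) (f (n + 1))
              = Jint (P.restrict C) (f (n + 1)) + Jint (P.restrict (B \ C)) (f (n + 1)) := by
            rw [hBCD]
            exact Jint_union hCm hDm hdis _ (fin_epos_min M _) (hfLB _ (n + 1))
          have hsplitw : Jint (P.restrict B) (fun ω => min (M : EReal) (X w ω))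
              = Jint (P.restrict C) (fun ω => min (M : EReal) (X w ω))
                + Jint (P.restrict (B \ C)) (fun ω => min (M : EReal) (X w ω)) := by
            rw [hBCD]
            exact Jint_union hCm hDm hdis _ (fin_epos_min M _)
              (fin_eneg_min hM.le _ (hneg _).ne)
          have hA5 : Jint (P.restrict B) (fun ω => min (M : EReal) (X w ω)) ≤ S := hTS w
          have hA6 : T (lseq (n + 1))
              ≤ Jint (P.restrict B) (f (n + 1)) + (ε / 2 ^ (n + 1)) * u := by
            refine Jint_le (measurable_const.min (hX _)) (hfm (n + 1)) (fin_epos_min M _)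
              (fin_eneg_min hM.le _ (hneg _).ne) (fin_epos_min M _) (hfLB B (n + 1)) ?_
            exact ae_restrict_of_ae ((hstep n).mono fun ω h => le_sup_right.trans h)
          have hA7 : S - 1 / ((n : ℝ) + 2) < T (lseq (n + 1)) := by
            have := hlseq (n + 1)
            have hcast : ((n + 1 : ℕ) : ℝ) + 1 = (n : ℝ) + 2 := by push_cast; ring
            rwa [hcast] at this
          have e1 : ((P.restrict C) Set.univ).toReal = (P C).toReal := by
            rw [Measure.restrict_apply_univ]
          have e2 : ((P.restrict (B \ C)) Set.univ).toReal = (P (B \ C)).toReal := by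
            rw [Measure.restrict_apply_univ]
          rw [e1] at hA1
          rw [e2] at hA2
          have huC0 : 0 ≤ (P C).toReal := ENNReal.toReal_nonneg
          have huD0 : 0 ≤ (P (B \ C)).toReal := ENNReal.toReal_nonneg
          have hx1 : (1 / ((n:ℝ) + 1) - δ) * (P C).toReal
              = (1 / ((n:ℝ) + 1)) * (P C).toReal - (δ:ℝ) * (P C).toReal := by ring
          have hx2 : (1 / ((n:ℝ) + 1)) * u
              = (1 / ((n:ℝ) + 1)) * (P C).toReal + (1 / ((n:ℝ) + 1)) * (P (B \ C)).toReal := by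
            rw [huB, huCD]; ring
          linarith [hA1, hA2, hA5, hA6, hA7, hsplitf, hsplitw, hx1, hx2]
        -- pass to the limit in n
        have hfinal : (P C).toReal ≤ 0 := by
          by_contra hpos
          push_neg at hpos
          obtain ⟨n, hn'⟩ := exists_nat_gt ((2 + ε) / ((δ : ℝ) * (P C).toReal))
          have h1 := hn n
          have hb1 : 1 / ((n : ℝ) + 2) ≤ 1 / ((n : ℝ) + 1) := by
            apply one_div_le_one_div_of_le <;> [positivity; linarith]
          have hb2 : ε / 2 ^ (n + 1) ≤ ε / ((n : ℝ) + 1) := by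
            apply div_le_div_of_nonneg_left hε.le (by positivity)
            have h2 : ((n : ℝ)) < 2 ^ n := by exact_mod_cast Nat.lt_two_pow_self
            have h3 : (1 : ℝ) ≤ 2 ^ n := one_le_pow₀ (by norm_num)
            calc (n : ℝ) + 1 ≤ 2 ^ n + 2 ^ n := by linarith
            _ = 2 ^ (n + 1) := by ring
          have hb3 : (ε / 2 ^ (n + 1)) * u ≤ ε / ((n : ℝ) + 1) := by
            have ha : (0:ℝ) ≤ ε / 2 ^ (n + 1) := by positivity
            nlinarith
          have hb4 : (1 / ((n : ℝ) + 1)) * u ≤ 1 / ((n : ℝ) + 1) := by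
            have ha : (0:ℝ) ≤ 1 / ((n : ℝ) + 1) := by positivity
            nlinarith
          have h5 : (δ : ℝ) * (P C).toReal ≤ (2 + ε) / ((n : ℝ) + 1) := by
            have : 1 / ((n : ℝ) + 2) ≤ 1 / ((n : ℝ) + 1) := hb1
            calc (δ : ℝ) * (P C).toReal
                ≤ 1 / ((n : ℝ) + 2) + (ε / 2 ^ (n + 1)) * u + (1 / ((n : ℝ) + 1)) * u := h1
            _ ≤ 1 / ((n : ℝ) + 1) + ε / ((n : ℝ) + 1) + 1 / ((n : ℝ) + 1) := by linarith
            _ = (2 + ε) / ((n : ℝ) + 1) := by ring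
          have hδC : 0 < (δ : ℝ) * (P C).toReal := mul_pos hδ hpos
          rw [div_lt_iff₀ hδC] at hn'
          have h6 : (2 + ε) / ((n : ℝ) + 1) < (δ : ℝ) * (P C).toReal := by
            rw [div_lt_iff₀ (by positivity : (0:ℝ) < (n : ℝ) + 1)]
            nlinarith
          linarith
        have := le_antisymm hfinal ENNReal.toReal_nonneg
        rcases (ENNReal.toReal_eq_zero_iff _).1 this with h0 | h0
        · exact h0
        · exact absurd h0 (measure_ne_top P C)
      have hNull : P (⋃ δ : ℚ, if 0 < (δ : ℝ) then
          (B ∩ {ω | V ω + ((δ : ℝ) : EReal) ≤ min (M : EReal) (X l ω)}) else ∅) = 0 :=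
        measure_iUnion_null fun δ => by
          split_ifs with h
          exacts [hC0 δ h, measure_empty]
      have hae := (measure_eq_zero_iff_ae_notMem (μ := P)).1 hNull
      filter_upwards [hae] with ω hω hB
      by_contra hlt
      push_neg at hlt
      obtain ⟨q₁, hq₁, hq₁'⟩ := EReal.exists_rat_btwn_of_lt hlt
      obtain ⟨q₂, hq₂, hq₂'⟩ := EReal.exists_rat_btwn_of_lt hq₁'
      apply hω
      refine Set.mem_iUnion.2 ⟨q₂ - q₁, ?_⟩
      have hq12 : (q₁ : ℝ) < (q₂ : ℝ) := by exact_mod_cast hq₂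
      have hpos : 0 < ((q₂ - q₁ : ℚ) : ℝ) := by push_cast; linarith
      rw [if_pos hpos]
      refine ⟨hB, ?_⟩
      calc V ω + (((q₂ - q₁ : ℚ) : ℝ) : EReal)
          ≤ ((q₁ : ℝ) : EReal) + (((q₂ - q₁ : ℚ) : ℝ) : EReal) := add_le_add_left hq₁.le _
      _ = ((q₂ : ℝ) : EReal) := by
          rw [← EReal.coe_add]
          congr 1
          push_cast
          ring
      _ ≤ min (M : EReal) (X l ω) := hq₂'.le
    -- the upper function W' and conclusion of the essential-sup property
    set W' : Ω → EReal := fun ω => if ω ∈ B ∧ V ω < (M : EReal) then V ω else ⊤ with hW'_def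
    have hub : ∀ l, ∀ᵐ ω ∂P, X l ω ≤ W' ω := by
      intro l
      filter_upwards [hdom l] with ω hω
      by_cases hc : ω ∈ B ∧ V ω < (M : EReal)
      · have hW'ω : W' ω = V ω := if_pos hc
        rw [hW'ω]
        have h1 := hω hc.1
        rcases le_total (X l ω) ((M : ℝ) : EReal) with h2 | h2
        · rwa [min_eq_right h2] at h1
        · exfalso
          rw [min_eq_left h2] at h1
          exact absurd (h1.trans_lt hc.2) (lt_irrefl _)
      · have hW'ω : W' ω = ⊤ := if_neg hc
        rw [hW'ω]; exact le_top
    have hZV : ∀ᵐ ω ∂P, ω ∈ B → min (M : EReal) (Z ω) ≤ V ω := by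
      filter_upwards [hZ.2 W' hub] with ω hω hB
      by_cases hc : ω ∈ B ∧ V ω < (M : EReal)
      · have hW'ω : W' ω = V ω := if_pos hc
        rw [hW'ω] at hω
        exact (min_le_right _ _).trans hω
      · have hVM' : (M : EReal) ≤ V ω := by
          rcases not_and_or.1 hc with h | h
          · exact absurd hB h
          · exact le_of_not_gt h
        exact (min_le_left _ _).trans hVM'
    have hJZ : Jint (P.restrict B) (fun ω => min (M : EReal) (Z ω))
        ≤ Jint (P.restrict B) V := by
      refine Jint_le0 (measurable_const.min hZmeas) hVm (fin_epos_min M _)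
        (fin_eneg_min hM.le _ hnegZ) ?_ ?_ ?_
      · exact lint_ne_top_of_ae_le (c := ENNReal.ofReal M) ENNReal.ofReal_ne_top
          (Filter.Eventually.of_forall fun ω => epos_coe M ▸ epos_mono (hVM ω))
      · exact ne_top_of_le_ne_top (hfLB B 0) (lintegral_mono fun ω => eneg_anti (hfV 0 ω))
      · filter_upwards [ae_restrict_of_ae hZV, ae_restrict_mem hBm] with ω h1 h2
        exact h1 h2
    linarith
  -- conclude from `key`
  apply le_of_forall_pos_le_add
  intro η hη
  have h1 := key η hη
  have h2 : η * u ≤ η := by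
    calc η * u ≤ η * 1 := mul_le_mul_of_nonneg_left hu1 hη.le
    _ = η := by ring
  linarith

/-- **Essential supremum and the upwards lattice property.** For a nonempty family
`(X l)_{l : Λ}` of extended-real random variables with integrable negative parts enjoying
the `(ε,M)`-upwards lattice property for all `ε, M ∈ (0,∞)`, one has
`E[esssup X | G] = esssup E[X | G]` a.s. (for any versions of the essential suprema and of
the conditional expectations involved). -/
theorem stmt_14 {Λ : Type*} [Nonempty Λ] {m : MeasurableSpace Ω}
    (P : @Measure Ω m) [IsProbabilityMeasure P]
    (G : MeasurableSpace Ω) (hG : G ≤ m)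
    (X : Λ → Ω → EReal) (hX : ∀ l, Measurable[m] (X l))
    (hneg : ∀ l, (∫⁻ ω, eneg (X l ω) ∂P) < ⊤)
    (hlat : ∀ ε : ℝ, 0 < ε → ∀ M : ℝ, 0 < M → ∀ l l' : Λ, ∃ l'' : Λ,
      ∀ᵐ ω ∂P, ((M : EReal) ⊓ X l ω) ⊔ ((M : EReal) ⊓ X l' ω) - (ε : EReal) ≤ X l'' ω)
    (Z : Ω → EReal) (hZmeas : Measurable[m] Z) (hZ : IsEssSup P X Z)
    (Y : Ω → EReal) (hY : IsCondExp G P Z Y)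
    (k : Λ → Ω → EReal) (hk : ∀ l, IsCondExp G P (X l) (k l))
    (W : Ω → EReal) (hWmeas : Measurable[G] W) (hW : IsEssSup P k W) :
    ∀ᵐ ω ∂P, Y ω = W ω := by
  have hYm : Measurable[m] Y := hY.1.mono hG le_rfl
  have hWm : Measurable[m] W := hWmeas.mono hG le_rfl
  obtain ⟨l₀⟩ := ‹Nonempty Λ›
  have hnegZ : (∫⁻ ω, eneg (Z ω) ∂P) ≠ ⊤ :=
    ne_top_of_le_ne_top (hneg l₀).ne (lintegral_mono_ae ((hZ.1 l₀).mono fun ω h => eneg_anti h))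
  -- direction 1 : each `k l ≤ Y` a.s., hence `W ≤ Y` a.s.
  have hkY : ∀ l, ∀ᵐ ω ∂P, k l ω ≤ Y ω := fun l =>
    isCondExp_mono hG (hX l) hZmeas (hneg l).ne hnegZ (hk l) hY (hZ.1 l)
  have hWY : ∀ᵐ ω ∂P, W ω ≤ Y ω := hW.2 Y hkY
  -- direction 2 : `Y ≤ W` a.s.
  have hYW : ∀ᵐ ω ∂P, Y ω ≤ W ω := by
    apply ae_le_of_rat_pairs
    intro q q' hqq'
    have hBG : MeasurableSet[G]
        ({ω | W ω < ((q : ℝ) : EReal)} ∩ {ω | ((q' : ℝ) : EReal) < Y ω}) :=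
      (measurableSet_lt hWmeas measurable_const).inter (measurableSet_lt measurable_const hY.1)
    set B := {ω | W ω < ((q : ℝ) : EReal)} ∩ {ω | ((q' : ℝ) : EReal) < Y ω} with hB_def
    have hBm : MeasurableSet[m] B := hG _ hBG
    have hBW : ∀ ω ∈ B, W ω < ((q : ℝ) : EReal) := fun ω h => h.1
    have hmem : ∀ᵐ ω ∂(P.restrict B), ω ∈ B := ae_restrict_mem hBm
    -- the truncation bound for every level
    have hkey : ∀ n : ℕ, Jint (P.restrict B)
        (fun ω => min ((((n : ℝ) + 1 : ℝ)) : EReal) (Z ω))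
          ≤ q * ((P.restrict B) Set.univ).toReal := fun n =>
      trunc_bound hG hX hneg hlat hZmeas hZ hnegZ hk hWm hW.1 hBG hBW (by positivity)
    set g : ℕ → Ω → EReal := fun n ω => min ((((n : ℝ) + 1 : ℝ)) : EReal) (Z ω) with hg_def
    have hgm : ∀ n, Measurable[m] (g n) := fun n => measurable_const.min hZmeas
    have hgmono : ∀ ω, Monotone fun n => g n ω := by
      intro ω i j hij
      refine min_le_min ?_ le_rfl
      have h1 : ((i : ℝ) + 1 : ℝ) ≤ ((j : ℝ) + 1 : ℝ) := by
        have := Nat.cast_le (α := ℝ).2 hij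
        linarith
      exact_mod_cast h1
    have hgsup : ∀ ω, (⨆ n, g n ω) = Z ω := by
      intro ω
      apply le_antisymm (iSup_le fun n => min_le_right _ _)
      by_cases hz : ∀ n : ℕ, ((((n : ℝ) + 1 : ℝ)) : EReal) < Z ω
      · have h1 : ∀ n, g n ω = ((((n : ℝ) + 1 : ℝ)) : EReal) := fun n => min_eq_left (hz n).le
        calc Z ω ≤ ⊤ := le_top
        _ = ⨆ n : ℕ, ((((n : ℝ) + 1 : ℝ)) : EReal) := iSup_coe_nat_top.symm
        _ = ⨆ n, g n ω := iSup_congr fun n => (h1 n).symm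
      · push_neg at hz
        obtain ⟨n, hn⟩ := hz
        calc Z ω = g n ω := (min_eq_right hn).symm
        _ ≤ ⨆ n, g n ω := le_iSup (fun n => g n ω) n
    have hgneg : ∀ n, (fun ω => eneg (g n ω)) = fun ω => eneg (Z ω) :=
      fun n => funext fun ω => eneg_min_coe (by positivity) _
    have hZnB : (∫⁻ ω, eneg (Z ω) ∂(P.restrict B)) ≠ ⊤ :=
      ne_top_of_le_ne_top hnegZ (lintegral_mono' Measure.restrict_le_self le_rfl)
    have hgP : ∀ n, (∫⁻ ω, epos (g n ω) ∂(P.restrict B)) ≠ ⊤ := fun n => fin_epos_min _ _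
    have hgN : ∀ n, (∫⁻ ω, eneg (g n ω) ∂(P.restrict B)) ≠ ⊤ := by
      intro n
      rw [hgneg n]
      exact hZnB
    -- finiteness of the positive part of Z over B
    have hZpB : (∫⁻ ω, epos (Z ω) ∂(P.restrict B)) ≠ ⊤ := by
      have h1 : ∫⁻ ω, epos (Z ω) ∂(P.restrict B)
          = ⨆ n, ∫⁻ ω, epos (g n ω) ∂(P.restrict B) := by
        have hm1 : ∀ n, Measurable[m] fun ω => epos (g n ω) :=
          fun n => measurable_epos.comp (hgm n)
        rw [← lintegral_iSup hm1 (fun i j hij ω => epos_mono (hgmono ω hij))]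
        apply lintegral_congr
        intro ω
        rw [← hgsup ω, epos_iSup (fun i j hij => hgmono ω hij)]
      have h2 : ∀ n, (∫⁻ ω, epos (g n ω) ∂(P.restrict B))
          ≤ ENNReal.ofReal (max (q * ((P.restrict B) Set.univ).toReal
            + (∫⁻ ω, eneg (Z ω) ∂(P.restrict B)).toReal) 0) := by
        intro n
        have h3 := hkey n
        have h4 : Jint (P.restrict B) (g n)
            = (∫⁻ ω, epos (g n ω) ∂(P.restrict B)).toReal
              - (∫⁻ ω, eneg (Z ω) ∂(P.restrict B)).toReal := by
          simp only [Jint]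
          rw [hgneg n]
        rw [ENNReal.le_ofReal_iff_toReal_le (hgP n) (le_max_right _ _)]
        have h5 : (∫⁻ ω, epos (g n ω) ∂(P.restrict B)).toReal
            ≤ q * ((P.restrict B) Set.univ).toReal
              + (∫⁻ ω, eneg (Z ω) ∂(P.restrict B)).toReal := by
          rw [h4] at h3
          linarith
        exact h5.trans (le_max_left _ _)
      rw [h1]
      exact ne_top_of_le_ne_top ENNReal.ofReal_ne_top (iSup_le h2)
    -- `∫_B Z ≤ q · P B`
    have hJZ : Jint (P.restrict B) Z ≤ q * ((P.restrict B) Set.univ).toReal := by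
      have h6 : Jint (P.restrict B) (fun ω => ⨆ n, g n ω)
          ≤ q * ((P.restrict B) Set.univ).toReal := by
        refine Jint_iSup_le hgm hgmono ?_ (hgN 0) hkey
        have he : ∫⁻ ω, epos (⨆ n, g n ω) ∂(P.restrict B)
            = ∫⁻ ω, epos (Z ω) ∂(P.restrict B) :=
          lintegral_congr fun ω => by rw [hgsup ω]
        rw [he]
        exact hZpB
      have hfun : (fun ω => ⨆ n, g n ω) = Z := funext hgsup
      rwa [hfun] at h6
    -- transfer to Y via the conditional-expectation property
    have hYnB : (∫⁻ ω, eneg (Y ω) ∂(P.restrict B)) ≠ ⊤ :=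
      lint_ne_top_of_ae_le (c := ENNReal.ofReal (-q')) ENNReal.ofReal_ne_top
        (hmem.mono fun ω hω => eneg_coe q' ▸ eneg_anti hω.2.le)
    have e := hY.2 B hBG
    have hsum : (∫⁻ ω in B, epos (Y ω) ∂P) + (∫⁻ ω in B, eneg (Z ω) ∂P) ≠ ⊤ := by
      rw [e]
      exact ENNReal.add_ne_top.2 ⟨hZpB, hYnB⟩
    have hYpB : (∫⁻ ω, epos (Y ω) ∂(P.restrict B)) ≠ ⊤ := (ENNReal.add_ne_top.1 hsum).1
    have hJYZ : Jint (P.restrict B) Y = Jint (P.restrict B) Z :=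
      Jint_eq hYpB hYnB hZpB hZnB e
    have hq'u : q' * ((P.restrict B) Set.univ).toReal ≤ Jint (P.restrict B) Y := by
      have h7 := Jint_le0 (f := fun _ => ((q' : ℝ) : EReal)) (g := Y) measurable_const hYm
        (fin_epos_const q') (fin_eneg_const q') hYpB hYnB
        (hmem.mono fun ω hω => hω.2.le)
      rwa [Jint_const] at h7
    have hu0 : (0:ℝ) ≤ ((P.restrict B) Set.univ).toReal := ENNReal.toReal_nonneg
    have hu : ((P.restrict B) Set.univ).toReal = 0 := by nlinarith
    rw [Measure.restrict_apply_univ] at hu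
    rcases (ENNReal.toReal_eq_zero_iff _).1 hu with h0 | h0
    · exact h0
    · exact absurd h0 (measure_ne_top P B)
  filter_upwards [hWY, hYW] with ω h1 h2
  exact le_antisymm h2 h1
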